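/- In a unary semigroup satisfying x̄x = xx̄, x̄²x = x̄, x²x̄ = x̿, and (x^n)‾ = x̄^n for all n ≥ 2, the identity (x^n)^{ω+q} = x^{ω+nq} holds for all n ≥ 2 and q ≥ 0, where x^{ω+r} := x̄·x^{r+1} for r ≥ 0. -/

import Mathlib

/-- `spow x n` is the `(n+1)`-st power of `x` in a semigroup: `spow x 0 = x`. -/
def spow {S : Type*} [Semigroup S] (x : S) : ℕ → S
  | 0 => x
  | n + 1 => spow x n * x

lemma spow_add {S : Type*} [Semigroup S] (x : S) (m n : ℕ) :
    spow x m * spow x n = spow x (m + n + 1) := by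
  induction n with
  | zero => rfl
  | succ n ih =>
      show spow x m * (spow x n * x) = _
      rw [← mul_assoc, ih]
      show spow x (m + n + 1 + 1) = spow x (m + (n + 1) + 1)
      ring_nf

lemma x_mul_spow {S : Type*} [Semigroup S] (x : S) (n : ℕ) :
    x * spow x n = spow x (n + 1) := by
  have := spow_add x 0 n
  simpa [Nat.add_comm, spow] using this

lemma spow_spow {S : Type*} [Semigroup S] (x : S) (m n : ℕ) :
    spow (spow x m) n = spow x (m * n + m + n) := by
  induction n with
  | zero => simp [spow]
  | succ n ih =>
      show spow (spow x m) n * spow x m = _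
      rw [ih, spow_add]
      congr 1
      ring

lemma absorb {S : Type*} [Semigroup S] (bar : S → S)
    (h1 : ∀ x : S, bar x * bar x * x = bar x) (x : S) :
    ∀ m : ℕ, spow (bar x) (m + 1) * spow x m = bar x := by
  intro m
  induction m with
  | zero => exact h1 x
  | succ m ih =>
      rw [← x_mul_spow x m, ← mul_assoc]
      have key : spow (bar x) (m + 2) * x = spow (bar x) (m + 1) := by
        show spow (bar x) (m + 1) * bar x * x = spow (bar x) m * bar x
        show spow (bar x) m * bar x * bar x * x = spow (bar x) m * bar x
        rw [mul_assoc, mul_assoc, ← mul_assoc (bar x), h1]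
      rw [key, ih]

/-- In a unary semigroup satisfying `x̄x = xx̄`, `x̄²x = x̄`,
`x²x̄ = bar (bar x)`, and `bar (xⁿ) = (bar x)ⁿ` for all `n ≥ 2`, the identity
`(xᵏ)^{ω+q} = x^{ω+kq}` holds for all `k ≥ 2`, `q ≥ 0`, where
`x^{ω+r} := x̄ x^{r+1} = bar x * spow x r` and `xᵏ = spow x (k-1)`. -/
theorem stmt19 {S : Type*} [Semigroup S] (bar : S → S)
    (h0 : ∀ x : S, bar x * x = x * bar x)
    (h1 : ∀ x : S, bar x * bar x * x = bar x)
    (h2 : ∀ x : S, x * x * bar x = bar (bar x))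
    (h3 : ∀ n : ℕ, 2 ≤ n → ∀ x : S, bar (spow x (n - 1)) = spow (bar x) (n - 1))
    (x : S) (k q : ℕ) (hk : 2 ≤ k) :
    bar (spow x (k - 1)) * spow (spow x (k - 1)) q = bar x * spow x (k * q) := by
  obtain ⟨t, rfl⟩ : ∃ t, k = t + 2 := ⟨k - 2, by omega⟩
  have hm : t + 2 - 1 = t + 1 := rfl
  have h3' := h3 (t + 2) (by omega) x
  rw [hm] at h3'
  rw [hm, h3', spow_spow]
  have he : (t + 1) * q + (t + 1) + q = t + (t + 2) * q + 1 := by ring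
  rw [he, ← spow_add, ← mul_assoc, absorb bar h1 x t]
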